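/- Consider the semi-discrete skew-symmetric shallow water momentum equation ∂ₜ(h∘u) = −(1/2)D(h∘u∘u) − (1/2)u∘D(h∘u) − (1/2)(h∘u)∘(Du) − g h∘(Dh) − (γ₂/2)(D₋−D₊)(g h − (1/2)u∘u), with D = (D₊+D₋)/2 satisfying the periodic dual-pairing SBP property and D±𝟙 = 0. Then total momentum is conserved: d/dt ⟨𝟙, h∘u⟩_H = 0. -/

import Mathlib

/-- Discrete momentum conservation for the semi-discrete skew-symmetric
shallow water momentum equation: `d/dt ⟨𝟙, h∘u⟩_H = 0`. -/
theorem semidiscrete_swe_momentum_conservation (N : ℕ)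
    (Dp Dm : Matrix (Fin N) (Fin N) ℝ) (w : Fin N → ℝ) (hw : ∀ i, 0 < w i)
    (g γ2 : ℝ) (hg : 0 < g) (hγ2 : 0 ≤ γ2)
    (hsbp : ∀ f q : Fin N → ℝ,
      (∑ i, w i * (Dp.mulVec f) i * q i) + (∑ i, w i * f i * (Dm.mulVec q) i) = 0)
    (hDp1 : Dp.mulVec (fun _ => (1 : ℝ)) = 0)
    (hDm1 : Dm.mulVec (fun _ => (1 : ℝ)) = 0)
    (h u : ℝ → Fin N → ℝ)
    (hode : ∀ t, HasDerivAt (fun s => fun i => h s i * u s i)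
      (fun i =>
        -(1 / 2) * ((((1 : ℝ) / 2) • (Dp + Dm)).mulVec (fun j => h t j * u t j * u t j)) i
        - (1 / 2) * u t i * ((((1 : ℝ) / 2) • (Dp + Dm)).mulVec (fun j => h t j * u t j)) i
        - (1 / 2) * (h t i * u t i) * ((((1 : ℝ) / 2) • (Dp + Dm)).mulVec (u t)) i
        - g * h t i * ((((1 : ℝ) / 2) • (Dp + Dm)).mulVec (h t)) i
        - (γ2 / 2) * ((Dm - Dp).mulVec (fun j => g * h t j - (1 / 2) * u t j * u t j)) i) t) :
    ∀ t, HasDerivAt (fun s => ∑ i, w i * (1 : ℝ) * (h s i * u s i)) 0 t := by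
  -- clean summation lemmas
  have sDp : ∀ f : Fin N → ℝ, (∑ i, w i * (Dp.mulVec f) i) = 0 := by
    intro f
    have := hsbp f (fun _ => 1)
    simpa [hDm1] using this
  have sDm : ∀ f : Fin N → ℝ, (∑ i, w i * (Dm.mulVec f) i) = 0 := by
    intro f
    have := hsbp (fun _ => 1) f
    simpa [hDp1] using this
  intro t
  set A : Fin N → ℝ := fun j => h t j * u t j * u t j with hA
  set B : Fin N → ℝ := fun j => h t j * u t j with hB
  set E : Fin N → ℝ := fun j => g * h t j - (1 / 2) * u t j * u t j with hE
  have e3 := hsbp (u t) B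
  have e4 := hsbp B (u t)
  have e5 := hsbp (h t) (h t)
  have hd := hode t
  rw [hasDerivAt_pi] at hd
  have hsum : HasDerivAt (fun s => ∑ i, w i * (1 : ℝ) * (h s i * u s i))
      (∑ i, w i * (1 : ℝ) *
        (-(1 / 2) * ((((1 : ℝ) / 2) • (Dp + Dm)).mulVec A) i
        - (1 / 2) * u t i * ((((1 : ℝ) / 2) • (Dp + Dm)).mulVec B) i
        - (1 / 2) * (h t i * u t i) * ((((1 : ℝ) / 2) • (Dp + Dm)).mulVec (u t)) i
        - g * h t i * ((((1 : ℝ) / 2) • (Dp + Dm)).mulVec (h t)) i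
        - (γ2 / 2) * ((Dm - Dp).mulVec E) i)) t := by
    exact HasDerivAt.fun_sum fun i _ => (hd i).const_mul (w i * 1)
  have hpt : ∀ i : Fin N, w i * (1 : ℝ) *
        (-(1 / 2) * ((((1 : ℝ) / 2) • (Dp + Dm)).mulVec A) i
        - (1 / 2) * u t i * ((((1 : ℝ) / 2) • (Dp + Dm)).mulVec B) i
        - (1 / 2) * (h t i * u t i) * ((((1 : ℝ) / 2) • (Dp + Dm)).mulVec (u t)) i
        - g * h t i * ((((1 : ℝ) / 2) • (Dp + Dm)).mulVec (h t)) i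
        - (γ2 / 2) * ((Dm - Dp).mulVec E) i) =
      (-(1/4)) * (w i * (Dp.mulVec A) i)
      + (-(1/4)) * (w i * (Dm.mulVec A) i)
      + (-(1/4)) * (w i * (Dp.mulVec (u t)) i * B i + w i * u t i * (Dm.mulVec B) i)
      + (-(1/4)) * (w i * (Dp.mulVec B) i * u t i + w i * B i * (Dm.mulVec (u t)) i)
      + (-(g/2)) * (w i * (Dp.mulVec (h t)) i * h t i + w i * h t i * (Dm.mulVec (h t)) i)
      + (γ2/2) * (w i * (Dp.mulVec E) i) + (-(γ2/2)) * (w i * (Dm.mulVec E) i) := by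
    intro i
    simp only [Matrix.smul_mulVec, Matrix.add_mulVec, Matrix.sub_mulVec,
      Pi.smul_apply, Pi.add_apply, Pi.sub_apply, smul_eq_mul, hB]
    ring
  have key : (∑ i, w i * (1 : ℝ) *
        (-(1 / 2) * ((((1 : ℝ) / 2) • (Dp + Dm)).mulVec A) i
        - (1 / 2) * u t i * ((((1 : ℝ) / 2) • (Dp + Dm)).mulVec B) i
        - (1 / 2) * (h t i * u t i) * ((((1 : ℝ) / 2) • (Dp + Dm)).mulVec (u t)) i
        - g * h t i * ((((1 : ℝ) / 2) • (Dp + Dm)).mulVec (h t)) i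
        - (γ2 / 2) * ((Dm - Dp).mulVec E) i)) = 0 := by
    rw [Finset.sum_congr rfl fun i _ => hpt i]
    simp only [Finset.sum_add_distrib, ← Finset.mul_sum]
    linear_combination (-(1/4)) * sDp A + (-(1/4)) * sDm A + (-(1/4)) * e3
      + (-(1/4)) * e4 + (-(g/2)) * e5 + (γ2/2) * sDp E + (-(γ2/2)) * sDm E
  rw [key] at hsum
  exact hsum
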